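/- Let s ∈ (0,1) and r ∈ (2−2s, 2). There exists a constant C = C(r,s) > 0 such that for all λ > 0, all Δt > 0 and every positive integer N, setting T := NΔt, t_j := jΔt and φ(t) := e^{−λt}, the modified interpolant I[φ] of φ on the uniform grid satisfies |∫_0^T (I[φ](t) − φ(t)) t^{s−1} dt| ≤ C · λ^{r/2} · Δt^{s + r/2}. The constant C is independent of λ, Δt and N. -/

import Mathlib

open Real MeasureTheory intervalIntegral

/-- The piecewise-linear interpolant of `φ` on the uniform grid `t_j = jΔt`:
`I[φ](t) = ((t_{j+1}−t)/Δt)·φ(t_j) + ((t−t_j)/Δt)·φ(t_{j+1})` for `t ∈ [t_j, t_{j+1})`. -/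
noncomputable def plInterp (Δt : ℝ) (φ : ℝ → ℝ) (t : ℝ) : ℝ :=
  ((((⌊t / Δt⌋₊ : ℝ) + 1) * Δt - t) / Δt) * φ ((⌊t / Δt⌋₊ : ℝ) * Δt) +
    ((t - (⌊t / Δt⌋₊ : ℝ) * Δt) / Δt) * φ (((⌊t / Δt⌋₊ : ℝ) + 1) * Δt)

/-- The modified interpolant: `I[φ](t) = φ(t_1)` on `[t_0, t_1)`, and the
piecewise-linear interpolant on `[t_j, t_{j+1})` for `j ≥ 1`. -/
noncomputable def modInterp (Δt : ℝ) (φ : ℝ → ℝ) (t : ℝ) : ℝ :=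
  if t < Δt then φ Δt else plInterp Δt φ t

lemma aux_one_sub_exp (x : ℝ) : 1 - Real.exp (-x) ≤ x := by
  have := Real.add_one_le_exp (-x); linarith

lemma aux_exp_neg_le (x : ℝ) (hx : 0 ≤ x) : Real.exp (-x) ≤ 1/(1+x) := by
  have h := Real.add_one_le_exp x
  rw [Real.exp_neg]
  rw [le_div_iff₀ (by linarith)]
  rw [inv_mul_le_iff₀ (Real.exp_pos x)]
  linarith

lemma aux_D (x α : ℝ) (hx : 0 < x) (h1 : 1 ≤ α) (h2 : α ≤ 2) :
    x - 1 + Real.exp (-x) ≤ x ^ α := by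
  rcases le_or_gt x 1 with h | h
  · have e1 : Real.exp (-x) ≤ 1/(1+x) := aux_exp_neg_le x hx.le
    have e2 : x - 1 + 1/(1+x) = x^2/(1+x) := by field_simp; ring
    have e3 : x^2/(1+x) ≤ x^2 := div_le_self (sq_nonneg x) (by linarith)
    have e5 : x ^ (2:ℝ) ≤ x ^ α := Real.rpow_le_rpow_of_exponent_ge hx h h2
    rw [show (2:ℝ) = ((2:ℕ):ℝ) by norm_num, Real.rpow_natCast] at e5
    linarith
  · have e1 : Real.exp (-x) ≤ 1 := Real.exp_le_one_iff.mpr (by linarith)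
    have e5 : x ^ (1:ℝ) ≤ x ^ α := Real.rpow_le_rpow_of_exponent_le h.le h1
    rw [Real.rpow_one] at e5
    linarith

lemma aux_min (x β : ℝ) (hx : 0 < x) (h0 : 0 ≤ β) (h1 : β ≤ 1) :
    1 - Real.exp (-x) ≤ x ^ β := by
  rcases le_or_gt x 1 with h | h
  · have e1 := aux_one_sub_exp x
    have e5 : x ^ (1:ℝ) ≤ x ^ β := Real.rpow_le_rpow_of_exponent_ge hx h h1
    rw [Real.rpow_one] at e5
    linarith
  · have e1 : (1:ℝ) ≤ x ^ β := Real.one_le_rpow h.le h0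
    have := Real.exp_pos (-x)
    linarith

lemma interp_err (lam Δt t : ℝ) (hlam : 0 < lam) (hΔt : 0 < Δt) (ht : Δt ≤ t) :
    0 ≤ plInterp Δt (fun u => Real.exp (-lam*u)) t - Real.exp (-lam*t) ∧
    plInterp Δt (fun u => Real.exp (-lam*u)) t - Real.exp (-lam*t)
      ≤ Real.exp (-(lam/2*t)) * (lam*Δt - 1 + Real.exp (-(lam*Δt))) := by
  have ht0 : 0 < t := lt_of_lt_of_le hΔt ht
  set j : ℕ := ⌊t / Δt⌋₊ with hj
  have h1j : (1:ℝ) ≤ (j:ℝ) := by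
    have : 1 ≤ j := Nat.le_floor (by rw [Nat.cast_one, le_div_iff₀ hΔt]; linarith)
    exact_mod_cast this
  have hjt : (j:ℝ) * Δt ≤ t := by
    have h := Nat.floor_le (show 0 ≤ t / Δt by positivity)
    rw [← hj] at h
    calc (j:ℝ) * Δt ≤ (t/Δt) * Δt := by nlinarith
      _ = t := by field_simp
  have htj : t < ((j:ℝ)+1) * Δt := by
    have h := Nat.lt_floor_add_one (t / Δt)
    rw [← hj] at h
    calc t = (t/Δt) * Δt := by field_simp
      _ < ((j:ℝ)+1) * Δt := by nlinarith
  set b : ℝ := (t - (j:ℝ)*Δt)/Δt with hbdef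
  have hb0 : 0 ≤ b := div_nonneg (by linarith) hΔt.le
  have hb1 : b ≤ 1 := by rw [hbdef, div_le_one hΔt]; nlinarith
  set y : ℝ := Real.exp (-(lam*Δt)) with hydef
  set E : ℝ := Real.exp (-lam*((j:ℝ)*Δt)) with hEdef
  have hy0 : 0 < y := Real.exp_pos _
  have hE0 : 0 < E := Real.exp_pos _
  have hy1 : y ≤ 1 := Real.exp_le_one_iff.mpr (by nlinarith)
  have hpl : plInterp Δt (fun u => Real.exp (-lam*u)) t = (1-b)*E + b*(E*y) := by
    simp only [plInterp, ← hj]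
    have e1 : ((((j:ℝ)+1) * Δt - t) / Δt) = 1 - b := by rw [hbdef]; field_simp; ring
    have e2 : Real.exp (-lam*(((j:ℝ)+1)*Δt)) = E * y := by
      rw [hEdef, hydef, ← Real.exp_add]; ring_nf
    rw [e1, ← hEdef, ← hbdef, e2]
  have hyb : y ^ b = Real.exp (-(lam*Δt)*b) := by
    rw [hydef, ← Real.exp_mul]
  have hφt : Real.exp (-lam*t) = E * y ^ b := by
    rw [hyb, hEdef, ← Real.exp_add]
    congr 1
    rw [hbdef]
    field_simp
    ring
  have hgm : y ^ b ≤ (1-b) * 1 + b * y :=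
    calc y ^ b = 1 ^ (1-b) * y ^ b := by rw [Real.one_rpow, one_mul]
      _ ≤ (1-b) * 1 + b * y :=
        Real.geom_mean_le_arith_mean2_weighted (by linarith) hb0 zero_le_one hy0.le (by ring)
  have hybge : 1 + (-(lam*Δt)*b) ≤ y ^ b := by
    rw [hyb]; have := Real.add_one_le_exp (-(lam*Δt)*b); linarith
  have hD0 : 0 ≤ lam*Δt - 1 + y := by
    have := Real.add_one_le_exp (-(lam*Δt)); rw [← hydef] at this; linarith
  have hbr0 : 0 ≤ (1-b) + b*y - y^b := by linarith
  have hbrD : (1-b) + b*y - y^b ≤ lam*Δt - 1 + y := by nlinarith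
  have hEle : E ≤ Real.exp (-(lam/2*t)) := by
    rw [hEdef]
    apply Real.exp_le_exp.mpr
    nlinarith
  constructor
  · rw [hpl, hφt]; nlinarith
  · rw [hpl, hφt]
    calc (1-b)*E + b*(E*y) - E*y^b = E * ((1-b) + b*y - y^b) := by ring
      _ ≤ Real.exp (-(lam/2*t)) * (lam*Δt - 1 + y) := by
          apply mul_le_mul hEle hbrD hbr0 (Real.exp_pos _).le
      _ = Real.exp (-(lam/2*t)) * (lam*Δt - 1 + Real.exp (-(lam*Δt))) := by rw [hydef]

/-- Let `s ∈ (0,1)` and `r ∈ (2−2s, 2)`. There exists `C = C(r,s) > 0` such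
that for all `λ > 0`, `Δt > 0` and every positive integer `N`, setting `T = NΔt` and
`φ(t) = e^{−λt}`, the modified interpolant `I[φ]` of `φ` on the uniform grid satisfies
`|∫_0^T (I[φ](t) − φ(t)) t^{s−1} dt| ≤ C λ^{r/2} Δt^{s+r/2}`. -/
theorem stmt4 (s r : ℝ) (hs : s ∈ Set.Ioo (0:ℝ) 1) (hr : r ∈ Set.Ioo (2 - 2*s) 2) :
    ∃ C : ℝ, 0 < C ∧ ∀ lam Δt : ℝ, 0 < lam → 0 < Δt → ∀ N : ℕ, 0 < N →
      |∫ t in (0:ℝ)..((N:ℝ) * Δt),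
          (modInterp Δt (fun u => Real.exp (-lam * u)) t - Real.exp (-lam * t)) * t ^ (s - 1)|
        ≤ C * lam ^ (r / 2) * Δt ^ (s + r / 2) := by
  obtain ⟨hs0, hs1⟩ := hs
  obtain ⟨hr1, hr2⟩ := hr
  refine ⟨1/s + 2^s * Real.Gamma s, by positivity, ?_⟩
  intro lam Δt hlam hΔt N hN
  set T : ℝ := (N:ℝ) * Δt with hTdef
  have hNT : (1:ℝ) ≤ (N:ℝ) := by exact_mod_cast hN
  have hT1 : Δt ≤ T := by rw [hTdef]; nlinarith
  have hT0 : 0 < T := lt_of_lt_of_le hΔt hT1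
  have hx : 0 < lam * Δt := by positivity
  set A : ℝ := (lam*Δt) ^ (r/2) with hA
  set B : ℝ := (lam*Δt) ^ (s+r/2) with hB
  have hA0 : 0 ≤ A := Real.rpow_nonneg hx.le _
  have hB0 : 0 ≤ B := Real.rpow_nonneg hx.le _
  set G : ℝ → ℝ :=
    fun t => if t < Δt then A * t^(s-1) else B * (t^(s-1) * Real.exp (-(lam/2*t))) with hG
  have hs1' : (-1:ℝ) < s - 1 := by linarith
  have hrint : IntervalIntegrable (fun t : ℝ => t^(s-1)) volume 0 T :=
    intervalIntegral.intervalIntegrable_rpow' hs1'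
  have hGmeas : Measurable G := by
    apply Measurable.ite measurableSet_Iio <;> fun_prop
  have hGnn : ∀ t : ℝ, 0 ≤ t → 0 ≤ G t := by
    intro t ht
    simp only [hG]
    have h1 : (0:ℝ) ≤ t^(s-1) := Real.rpow_nonneg ht _
    split <;> positivity
  have hGle : ∀ t : ℝ, 0 ≤ t → G t ≤ (A+B) * t^(s-1) := by
    intro t ht
    have h1 : (0:ℝ) ≤ t^(s-1) := Real.rpow_nonneg ht _
    have h2 : Real.exp (-(lam/2*t)) ≤ 1 := Real.exp_le_one_iff.mpr (by nlinarith)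
    simp only [hG]
    split
    · nlinarith
    · have : B * (t^(s-1) * Real.exp (-(lam/2*t))) ≤ B * (t^(s-1) * 1) := by
        apply mul_le_mul_of_nonneg_left _ hB0
        exact mul_le_mul_of_nonneg_left h2 h1
      nlinarith
  have hGint : IntervalIntegrable G volume 0 T := by
    apply IntervalIntegrable.mono_fun' (hrint.const_mul (A+B))
      hGmeas.aestronglyMeasurable
    apply ae_restrict_of_forall_mem measurableSet_uIoc
    intro t ht
    rw [Set.uIoc_of_le hT0.le] at ht
    show ‖G t‖ ≤ (A+B) * t^(s-1)
    rw [Real.norm_eq_abs, abs_of_nonneg (hGnn t ht.1.le)]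
    exact hGle t ht.1.le
  -- pointwise bound
  have hpoint : ∀ t ∈ Set.Ioc (0:ℝ) T,
      ‖(modInterp Δt (fun u => Real.exp (-lam * u)) t - Real.exp (-lam * t)) * t ^ (s - 1)‖
        ≤ G t := by
    intro t ht
    obtain ⟨ht0, htT⟩ := ht
    have htp : (0:ℝ) ≤ t^(s-1) := Real.rpow_nonneg ht0.le _
    rw [Real.norm_eq_abs, abs_mul, abs_of_nonneg htp]
    simp only [hG]
    by_cases hcase : t < Δt
    · rw [if_pos hcase]
      simp only [modInterp, if_pos hcase]
      apply mul_le_mul_of_nonneg_right _ htp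
      have h1 : Real.exp (-lam*t) ≤ 1 := Real.exp_le_one_iff.mpr (by nlinarith)
      have h2 : Real.exp (-lam*Δt) ≤ Real.exp (-lam*t) :=
        Real.exp_le_exp.mpr (by nlinarith)
      have h3 : 1 - Real.exp (-(lam*Δt)) ≤ A :=
        aux_min (lam*Δt) (r/2) hx (by linarith) (by linarith)
      rw [abs_of_nonpos (by linarith), neg_sub]
      rw [show -(lam*Δt) = -lam*Δt by ring] at h3
      linarith
    · push_neg at hcase
      rw [if_neg (not_lt.mpr hcase)]
      simp only [modInterp, if_neg (not_lt.mpr hcase)]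
      obtain ⟨hge0, hle⟩ := interp_err lam Δt t hlam hΔt hcase
      rw [abs_of_nonneg hge0]
      have hD : lam*Δt - 1 + Real.exp (-(lam*Δt)) ≤ B :=
        aux_D (lam*Δt) (s+r/2) hx (by linarith) (by linarith)
      have hDnn : 0 ≤ lam*Δt - 1 + Real.exp (-(lam*Δt)) := by
        have := Real.add_one_le_exp (-(lam*Δt)); linarith
      calc (plInterp Δt (fun u => Real.exp (-lam*u)) t - Real.exp (-lam*t)) * t^(s-1)
          ≤ (Real.exp (-(lam/2*t)) * (lam*Δt - 1 + Real.exp (-(lam*Δt)))) * t^(s-1) :=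
            mul_le_mul_of_nonneg_right hle htp
        _ ≤ (Real.exp (-(lam/2*t)) * B) * t^(s-1) := by
            apply mul_le_mul_of_nonneg_right _ htp
            exact mul_le_mul_of_nonneg_left hD (Real.exp_pos _).le
        _ = B * (t^(s-1) * Real.exp (-(lam/2*t))) := by ring
  -- step 1
  have step1 : |∫ t in (0:ℝ)..T,
      (modInterp Δt (fun u => Real.exp (-lam * u)) t - Real.exp (-lam * t)) * t ^ (s - 1)|
        ≤ |∫ t in (0:ℝ)..T, G t| := by
    have h := intervalIntegral.norm_integral_le_abs_of_norm_le (μ := volume) (a := (0:ℝ)) (b := T)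
      (f := fun t => (modInterp Δt (fun u => Real.exp (-lam * u)) t - Real.exp (-lam * t))
        * t ^ (s - 1)) (g := G)
      (ae_restrict_of_forall_mem measurableSet_uIoc
        (fun t ht => hpoint t (by rwa [Set.uIoc_of_le hT0.le] at ht))) hGint
    simpa [Real.norm_eq_abs] using h
  -- split the integral
  have hG1 : IntervalIntegrable G volume 0 Δt := hGint.mono_set
    (by rw [Set.uIcc_of_le hΔt.le, Set.uIcc_of_le hT0.le]; exact Set.Icc_subset_Icc le_rfl hT1)
  have hG2 : IntervalIntegrable G volume Δt T := hGint.mono_set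
    (by rw [Set.uIcc_of_le hT1, Set.uIcc_of_le hT0.le]; exact Set.Icc_subset_Icc hΔt.le le_rfl)
  have hsplit : ∫ t in (0:ℝ)..T, G t = (∫ t in (0:ℝ)..Δt, G t) + ∫ t in Δt..T, G t :=
    (intervalIntegral.integral_add_adjacent_intervals hG1 hG2).symm
  -- first piece
  have hne : ∀ᵐ x : ℝ ∂volume, x ≠ Δt := by
    rw [MeasureTheory.ae_iff]
    simp only [ne_eq, not_not, Set.setOf_eq_eq_singleton]
    exact measure_singleton Δt
  have hI1 : ∫ t in (0:ℝ)..Δt, G t = A * (Δt^s / s) := by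
    rw [intervalIntegral.integral_congr_ae (g := fun t => A * t^(s-1)) ?_]
    · rw [intervalIntegral.integral_const_mul, integral_rpow (Or.inl hs1')]
      rw [Real.zero_rpow (by intro hh; rw [sub_add_cancel] at hh; exact hs0.ne' hh)]
      rw [sub_add_cancel]
      ring
    · filter_upwards [hne] with x hx hmem
      rw [Set.uIoc_of_le hΔt.le] at hmem
      simp only [hG]
      rw [if_pos (lt_of_le_of_ne hmem.2 hx)]
  -- second piece
  have hI2eq : ∫ t in Δt..T, G t = B * ∫ t in Δt..T, t^(s-1) * Real.exp (-(lam/2*t)) := by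
    rw [← intervalIntegral.integral_const_mul]
    apply intervalIntegral.integral_congr
    intro x hx
    rw [Set.uIcc_of_le hT1] at hx
    simp only [hG]
    rw [if_neg (not_lt.mpr hx.1)]
  have hIoiInt : IntegrableOn (fun t : ℝ => t^(s-1) * Real.exp (-(lam/2 * t))) (Set.Ioi 0) := by
    have h := integrableOn_rpow_mul_exp_neg_mul_rpow (p := 1) (s := s-1) (b := lam/2)
      hs1' zero_lt_one (by positivity)
    apply h.congr_fun _ measurableSet_Ioi
    intro x hx
    simp only [Real.rpow_one]
    ring_nf
  have hI2le : ∫ t in Δt..T, t^(s-1) * Real.exp (-(lam/2*t))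
      ≤ (1/(lam/2))^s * Real.Gamma s := by
    rw [← Real.integral_rpow_mul_exp_neg_mul_Ioi hs0 (show (0:ℝ) < lam/2 by positivity)]
    rw [intervalIntegral.integral_of_le hT1]
    apply MeasureTheory.setIntegral_mono_set hIoiInt
    · apply ae_restrict_of_forall_mem measurableSet_Ioi
      intro x hx
      have hx0 : (0:ℝ) < x := hx
      positivity
    · exact HasSubset.Subset.eventuallyLE (fun x hx => hΔt.trans hx.1)
  have hI2nn : 0 ≤ ∫ t in Δt..T, t^(s-1) * Real.exp (-(lam/2*t)) := by
    apply intervalIntegral.integral_nonneg hT1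
    intro u hu
    have : (0:ℝ) < u := lt_of_lt_of_le hΔt hu.1
    positivity
  have hGnonneg : 0 ≤ ∫ t in (0:ℝ)..T, G t :=
    intervalIntegral.integral_nonneg hT0.le (fun u hu => hGnn u hu.1)
  -- final algebra
  have e1 : A = lam^(r/2) * Δt^(r/2) := Real.mul_rpow hlam.le hΔt.le
  have e2 : B = lam^s * lam^(r/2) * (Δt^s * Δt^(r/2)) := by
    rw [hB, Real.mul_rpow hlam.le hΔt.le, Real.rpow_add hlam, Real.rpow_add hΔt]
  have e3 : Δt^(s+r/2) = Δt^s * Δt^(r/2) := Real.rpow_add hΔt _ _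
  have e4 : ((1:ℝ)/(lam/2))^s = 2^s/lam^s := by
    rw [one_div_div, Real.div_rpow (by norm_num) hlam.le]
  have hlams : (0:ℝ) < lam^s := Real.rpow_pos_of_pos hlam s
  calc |∫ t in (0:ℝ)..T,
        (modInterp Δt (fun u => Real.exp (-lam * u)) t - Real.exp (-lam * t)) * t ^ (s - 1)|
      ≤ |∫ t in (0:ℝ)..T, G t| := step1
    _ = ∫ t in (0:ℝ)..T, G t := abs_of_nonneg hGnonneg
    _ = (∫ t in (0:ℝ)..Δt, G t) + ∫ t in Δt..T, G t := hsplit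
    _ ≤ A * (Δt^s / s) + B * ((1/(lam/2))^s * Real.Gamma s) := by
        rw [hI1, hI2eq]
        have := mul_le_mul_of_nonneg_left hI2le hB0
        linarith
    _ = (1/s + 2^s * Real.Gamma s) * lam^(r/2) * Δt^(s+r/2) := by
        rw [e1, e2, e3, e4]
        field_simp
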